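/- arXiv:math-ph/0609028 — 2 statements merged into one kernel-verified Lean document; each statement's English description precedes it below -/
import Mathlib

section
/- The number of preimages of any fixed Dyck path of length 2k−2 under the map sending a non-returning closed walk (C, v_2, ..., v_{2k}, C) in the (q+1)-regular tree to the sequence (dist(v_2)−1, ..., dist(v_{2k})−1) equals (q+1)·q^{k−1}. -/
/-- Vertices of the infinite (q+1)-regular tree: reduced words over an alphabet of
q+1 letters, i.e. lists with no two consecutive letters equal. The root is the
empty word; each vertex is adjacent to its extensions by one letter and (if
nonempty) to the word with its first letter removed, giving degree q+1. -/
def TreeV (q : ℕ) : Type := {l : List (Fin (q + 1)) // l.Chain' (· ≠ ·)}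

/-- The root of the (q+1)-regular tree. -/
def treeRoot (q : ℕ) : TreeV q := ⟨[], List.IsChain.nil⟩

/-- Adjacency in the (q+1)-regular tree: one word is obtained from the other by
prepending a single letter. -/
def treeAdj (q : ℕ) (x y : TreeV q) : Prop :=
  (∃ a : Fin (q + 1), y.val = a :: x.val) ∨ (∃ a : Fin (q + 1), x.val = a :: y.val)

/-- Number of closed walks of length n in the (q+1)-regular tree starting and
ending at the root. -/
noncomputable def closedWalkCount (q n : ℕ) : ℕ :=
  Nat.card {f : Fin (n + 1) → TreeV q //
    f 0 = treeRoot q ∧ f (Fin.last n) = treeRoot q ∧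
    ∀ i : Fin n, treeAdj q (f i.castSucc) (f i.succ)}

/-- Number of closed walks of length 2k at the root of the (q+1)-regular tree that
do not visit the root at any intermediate step. -/
noncomputable def nonReturningWalkCount (q k : ℕ) : ℕ :=
  Nat.card {f : Fin (2 * k + 1) → TreeV q //
    f 0 = treeRoot q ∧ f (Fin.last (2 * k)) = treeRoot q ∧
    (∀ i : Fin (2 * k), treeAdj q (f i.castSucc) (f i.succ)) ∧
    ∀ i : Fin (2 * k + 1), i ≠ 0 → i ≠ Fin.last (2 * k) → f i ≠ treeRoot q}

attribute [reducible] TreeV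

def Walk (q n : ℕ) (L : ℕ → ℕ) : Type :=
  {f : Fin (n + 1) → TreeV q //
    (∀ i : Fin n, treeAdj q (f i.castSucc) (f i.succ)) ∧
    ∀ i : Fin (n + 1), (f i).val.length = L i}

lemma adj_up_cons {q : ℕ} {w x : TreeV q} (hadj : treeAdj q w x)
    (hlen : x.val.length = w.val.length + 1) (hx : x.val ≠ []) :
    x.val = x.val.head hx :: w.val := by
  rcases hadj with ⟨a, ha⟩ | ⟨a, ha⟩
  · simp [ha]
  · rw [ha] at hlen; simp at hlen; omega

lemma cons_chain'_head_ne {q : ℕ} {a : Fin (q + 1)} {l : List (Fin (q + 1))}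
    (h : (a :: l).Chain' (· ≠ ·)) (hl : l ≠ []) : a ≠ l.head hl :=
  (List.isChain_cons.mp h).1 _ (by rw [List.head?_eq_head hl]; rfl)

def walkZeroEquiv (q : ℕ) (L : ℕ → ℕ) (h0 : L 0 = 0) : Walk q 0 L ≃ Unit where
  toFun _ := ()
  invFun _ := ⟨fun _ => treeRoot q, fun i => i.elim0, fun i => by
    have : (i : ℕ) = 0 := by omega
    simp [treeRoot, this, h0]⟩
  left_inv f := by
    apply Subtype.ext
    funext i
    have h1 : (i : ℕ) = 0 := by omega
    have := f.2.2 i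
    rw [h1, h0] at this
    apply Subtype.ext
    exact (List.length_eq_zero_iff.mp this).symm ▸ rfl
  right_inv _ := rfl

def walkDownEquiv (q n : ℕ) (L : ℕ → ℕ) (h : L n = L (n + 1) + 1) :
    Walk q (n + 1) L ≃ Walk q n L where
  toFun f := ⟨Fin.init f.1, by
      intro i
      have := f.2.1 i.castSucc
      rwa [Fin.succ_castSucc] at this, fun i => f.2.2 i.castSucc⟩
  invFun g := by
    refine ⟨Fin.snoc (α := fun _ => TreeV q) g.1 ⟨(g.1 (Fin.last n)).val.tail, (g.1 (Fin.last n)).2.tail⟩, ?_, ?_⟩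
    · intro i
      refine Fin.lastCases ?_ ?_ i
      · simp only [Fin.succ_last, Fin.snoc_last, Fin.snoc_castSucc]
        right
        have hw : (g.1 (Fin.last n)).val ≠ [] := by
          have := g.2.2 (Fin.last n)
          simp only [Fin.val_last] at this
          intro hh; rw [hh] at this; simp at this; omega
        exact ⟨_, (List.cons_head_tail hw).symm⟩
      · intro j
        simp only [Fin.succ_castSucc, Fin.snoc_castSucc]
        exact g.2.1 j
    · intro i
      refine Fin.lastCases ?_ ?_ i
      · simp only [Fin.snoc_last]
        have := g.2.2 (Fin.last n)
        simp only [Fin.val_last] at this ⊢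
        simp [List.length_tail, this, h]
      · intro j
        simp only [Fin.snoc_castSucc]
        simpa using g.2.2 j
  left_inv f := by
    apply Subtype.ext
    funext i
    refine Fin.lastCases ?_ ?_ i
    · simp only [Fin.snoc_last]
      have hadj := f.2.1 (Fin.last n)
      rw [Fin.succ_last] at hadj
      have hl1 := f.2.2 (Fin.last n).castSucc
      have hl2 := f.2.2 (Fin.last (n + 1))
      simp only [Fin.coe_castSucc, Fin.val_last] at hl1 hl2
      rcases hadj with ⟨a, ha⟩ | ⟨a, ha⟩
      · exfalso; rw [ha] at hl2; simp [hl1] at hl2; omega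
      · apply Subtype.ext
        show (f.1 ((Fin.last n).castSucc)).val.tail = (f.1 (Fin.last (n + 1))).val
        rw [ha]
        rfl
    · intro j
      simp only [Fin.snoc_castSucc]
      rfl
  right_inv g := by
    apply Subtype.ext
    funext i
    show Fin.snoc (α := fun _ => TreeV q) g.1 (⟨(g.1 (Fin.last n)).val.tail, (g.1 (Fin.last n)).2.tail⟩ : TreeV q) i.castSucc = g.1 i
    rw [Fin.snoc_castSucc]

def walkRestrict {q n : ℕ} {L : ℕ → ℕ} (f : Walk q (n + 1) L) : Walk q n L :=
  ⟨Fin.init f.1, fun i => by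
      have := f.2.1 i.castSucc
      rwa [Fin.succ_castSucc] at this,
    fun i => f.2.2 i.castSucc⟩

lemma walk_ne_nil {q m : ℕ} {L : ℕ → ℕ} (g : Walk q m L) (i : Fin (m + 1))
    (h : L (i : ℕ) ≠ 0) : (g.1 i).val ≠ [] := by
  intro hh
  have := g.2.2 i
  rw [hh] at this
  simp at this
  omega

lemma walk_up_cons {q n : ℕ} {L : ℕ → ℕ} (f : Walk q (n + 1) L) (h : L (n + 1) = L n + 1)
    (hx : (f.1 (Fin.last (n + 1))).val ≠ []) :
    (f.1 (Fin.last (n + 1))).val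
      = (f.1 (Fin.last (n + 1))).val.head hx :: (f.1 ((Fin.last n).castSucc)).val := by
  apply adj_up_cons
  · have := f.2.1 (Fin.last n)
    rwa [Fin.succ_last] at this
  · have h1 := f.2.2 (Fin.last (n + 1))
    have h2 := f.2.2 (Fin.last n).castSucc
    simp only [Fin.val_last, Fin.coe_castSucc] at h1 h2
    rw [h1, h2, h]

lemma walk_up_head_ne {q n : ℕ} {L : ℕ → ℕ} (f : Walk q (n + 1) L)
    (h : L (n + 1) = L n + 1) (hx : (f.1 (Fin.last (n + 1))).val ≠ [])
    (hw : (f.1 ((Fin.last n).castSucc)).val ≠ []) :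
    (f.1 (Fin.last (n + 1))).val.head hx ≠ (f.1 ((Fin.last n).castSucc)).val.head hw := by
  have hc := (f.1 (Fin.last (n + 1))).2
  rw [walk_up_cons f h hx] at hc
  exact cons_chain'_head_ne hc hw

lemma cons_chain' {q : ℕ} {a : Fin (q + 1)} {l : List (Fin (q + 1))} (hl : l ≠ [])
    (hc : l.Chain' (· ≠ ·)) (hne : a ≠ l.head hl) : (a :: l).Chain' (· ≠ ·) :=
  List.isChain_cons.mpr ⟨by
    simp only [List.head?_eq_head hl, Option.mem_some_iff]
    rintro y rfl
    exact hne, hc⟩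

def walkUpFun (q n : ℕ) (L : ℕ → ℕ) (h : L (n + 1) = L n + 1) (h1 : L n ≠ 0) :
    Walk q n L × Fin q → Walk q (n + 1) L := fun gt =>
  ⟨Fin.snoc (α := fun _ => TreeV q) gt.1.1
      ⟨((finSuccAboveEquiv ((gt.1.1 (Fin.last n)).val.head
            (walk_ne_nil gt.1 _ (by simpa using h1)))) gt.2).1
          :: (gt.1.1 (Fin.last n)).val,
        cons_chain' (walk_ne_nil gt.1 _ (by simpa using h1)) (gt.1.1 (Fin.last n)).2
          ((finSuccAboveEquiv _) gt.2).2⟩,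
    by
      intro i
      refine Fin.lastCases ?_ (fun j => ?_) i
      · simp only [Fin.succ_last, Fin.snoc_last, Fin.snoc_castSucc]
        exact Or.inl ⟨_, rfl⟩
      · simp only [Fin.succ_castSucc, Fin.snoc_castSucc]
        exact gt.1.2.1 j,
    by
      intro i
      refine Fin.lastCases ?_ (fun j => ?_) i
      · have := gt.1.2.2 (Fin.last n)
        simp only [Fin.val_last] at this
        simp only [Fin.snoc_last, Fin.val_last]
        simp [this, h]
      · simp only [Fin.snoc_castSucc, Fin.coe_castSucc]
        exact gt.1.2.2 j⟩

lemma walkUpFun_bijective (q n : ℕ) (L : ℕ → ℕ) (h : L (n + 1) = L n + 1) (h1 : L n ≠ 0) :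
    Function.Bijective (walkUpFun q n L h h1) := by
  constructor
  · intro a b hEq
    obtain ⟨g, t⟩ := a
    obtain ⟨g', t'⟩ := b
    have h11 := congrArg Subtype.val hEq
    have hg : g.1 = g'.1 := by
      funext i
      have := congrFun h11 i.castSucc
      simpa only [walkUpFun, Fin.snoc_castSucc] using this
    have hgg : g = g' := Subtype.ext hg
    subst hgg
    have hv := congrFun h11 (Fin.last (n + 1))
    simp only [walkUpFun, Fin.snoc_last] at hv
    have hval := congrArg Subtype.val hv
    simp only [List.cons.injEq, and_true] at hval
    have ht : t = t' := (finSuccAboveEquiv _).injective (Subtype.coe_injective hval)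
    rw [ht]
  · intro f
    have hw : (f.1 ((Fin.last n).castSucc)).val ≠ [] := walk_ne_nil f _ (by simpa using h1)
    have hx : (f.1 (Fin.last (n + 1))).val ≠ [] := walk_ne_nil f _ (by simp [h])
    refine ⟨(walkRestrict f,
      (finSuccAboveEquiv ((f.1 ((Fin.last n).castSucc)).val.head hw)).symm
        ⟨(f.1 (Fin.last (n + 1))).val.head hx, walk_up_head_ne f h hx hw⟩), ?_⟩
    apply Subtype.ext
    funext i
    refine Fin.lastCases ?_ (fun j => ?_) i
    · simp only [walkUpFun, Fin.snoc_last]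
      apply Subtype.ext
      show ((finSuccAboveEquiv ((f.1 ((Fin.last n).castSucc)).val.head hw))
          ((finSuccAboveEquiv ((f.1 ((Fin.last n).castSucc)).val.head hw)).symm
            ⟨(f.1 (Fin.last (n + 1))).val.head hx, walk_up_head_ne f h hx hw⟩)).1
          :: (f.1 ((Fin.last n).castSucc)).val
          = (f.1 (Fin.last (n + 1))).val
      rw [Equiv.apply_symm_apply]
      exact (walk_up_cons f h hx).symm
    · simp only [walkUpFun, Fin.snoc_castSucc]
      rfl

def walkUp0Fun (q n : ℕ) (L : ℕ → ℕ) (h : L (n + 1) = L n + 1) (h0 : L n = 0) :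
    Walk q n L × Fin (q + 1) → Walk q (n + 1) L := fun gt =>
  ⟨Fin.snoc (α := fun _ => TreeV q) gt.1.1 ⟨[gt.2], List.isChain_singleton _⟩,
    by
      intro i
      refine Fin.lastCases ?_ (fun j => ?_) i
      · simp only [Fin.succ_last, Fin.snoc_last, Fin.snoc_castSucc]
        left
        refine ⟨gt.2, ?_⟩
        have hnil : (gt.1.1 (Fin.last n)).val = [] := by
          apply List.length_eq_zero_iff.mp
          have := gt.1.2.2 (Fin.last n)
          simp only [Fin.val_last] at this
          rw [this, h0]
        rw [hnil]
      · simp only [Fin.succ_castSucc, Fin.snoc_castSucc]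
        exact gt.1.2.1 j,
    by
      intro i
      refine Fin.lastCases ?_ (fun j => ?_) i
      · simp only [Fin.snoc_last, Fin.val_last]
        simp [h, h0]
      · simp only [Fin.snoc_castSucc, Fin.coe_castSucc]
        exact gt.1.2.2 j⟩

lemma walkUp0Fun_bijective (q n : ℕ) (L : ℕ → ℕ) (h : L (n + 1) = L n + 1) (h0 : L n = 0) :
    Function.Bijective (walkUp0Fun q n L h h0) := by
  constructor
  · intro a b hEq
    obtain ⟨g, t⟩ := a
    obtain ⟨g', t'⟩ := b
    have h11 := congrArg Subtype.val hEq
    have hg : g.1 = g'.1 := by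
      funext i
      have := congrFun h11 i.castSucc
      simpa only [walkUp0Fun, Fin.snoc_castSucc] using this
    have hgg : g = g' := Subtype.ext hg
    subst hgg
    have hv := congrFun h11 (Fin.last (n + 1))
    simp only [walkUp0Fun, Fin.snoc_last] at hv
    have hval := congrArg Subtype.val hv
    simp only [List.cons.injEq, and_true] at hval
    rw [hval]
  · intro f
    have hx : (f.1 (Fin.last (n + 1))).val ≠ [] := walk_ne_nil f _ (by simp [h])
    have hwnil : (f.1 ((Fin.last n).castSucc)).val = [] := by
      apply List.length_eq_zero_iff.mp
      have := f.2.2 (Fin.last n).castSucc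
      simp only [Fin.coe_castSucc, Fin.val_last] at this
      rw [this, h0]
    refine ⟨(walkRestrict f, (f.1 (Fin.last (n + 1))).val.head hx), ?_⟩
    apply Subtype.ext
    funext i
    refine Fin.lastCases ?_ (fun j => ?_) i
    · simp only [walkUp0Fun, Fin.snoc_last]
      apply Subtype.ext
      show [(f.1 (Fin.last (n + 1))).val.head hx] = (f.1 (Fin.last (n + 1))).val
      conv_rhs => rw [walk_up_cons f h hx, hwnil]
    · simp only [walkUp0Fun, Fin.snoc_castSucc]
      rfl

lemma walk_card (q : ℕ) (L : ℕ → ℕ) (h0 : L 0 = 0) :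
    ∀ n, (∀ i, i < n → (L (i + 1) = L i + 1 ∨ L i = L (i + 1) + 1)) →
      Nat.card (Walk q n L) =
        ∏ i ∈ Finset.range n,
          (if L (i + 1) = L i + 1 then (if L i = 0 then q + 1 else q) else 1) := by
  intro n
  induction n with
  | zero =>
    intro _
    rw [Nat.card_congr (walkZeroEquiv q L h0)]
    simp
  | succ n ih =>
    intro hs
    rw [Finset.prod_range_succ, ← ih (fun i hi => hs i (by omega))]
    by_cases hup : L (n + 1) = L n + 1
    · by_cases hz : L n = 0
      · rw [if_pos hup, if_pos hz,
          ← Nat.card_eq_of_bijective _ (walkUp0Fun_bijective q n L hup hz), Nat.card_prod]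
        simp [Nat.card_eq_fintype_card]
      · rw [if_pos hup, if_neg hz,
          ← Nat.card_eq_of_bijective _ (walkUpFun_bijective q n L hup hz), Nat.card_prod]
        simp [Nat.card_eq_fintype_card]
    · have hdown : L n = L (n + 1) + 1 := by
        rcases hs n (by omega) with h | h
        · exact absurd h hup
        · exact h
      rw [if_neg hup, Nat.card_congr (walkDownEquiv q n L hdown), mul_one]

lemma prod_eval (q k : ℕ) (hk : 1 ≤ k) (L : ℕ → ℕ) (h0 : L 0 = 0) (hend : L (2 * k) = 0)
    (hpos : ∀ i, 0 < i → i < 2 * k → L i ≠ 0)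
    (hsteps : ∀ i, i < 2 * k → (L (i + 1) = L i + 1 ∨ L i = L (i + 1) + 1)) :
    (∏ i ∈ Finset.range (2 * k),
      (if L (i + 1) = L i + 1 then (if L i = 0 then q + 1 else q) else 1))
      = (q + 1) * q ^ (k - 1) := by
  have key : ∀ n, n ≤ 2 * k →
      2 * (∑ i ∈ Finset.range n, (if L (i + 1) = L i + 1 then 1 else 0)) = L n + n := by
    intro n
    induction n with
    | zero => simp [h0]
    | succ n ih =>
      intro hn
      rw [Finset.sum_range_succ]
      have ihn := ih (by omega)
      rcases hsteps n (by omega) with hup | hdn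
      · rw [if_pos hup]; omega
      · rw [if_neg (by omega)]; omega
  have hsum : (∑ i ∈ Finset.range (2 * k), (if L (i + 1) = L i + 1 then 1 else 0)) = k := by
    have := key (2 * k) le_rfl
    omega
  have hup0 : L 1 = L 0 + 1 := by
    rcases hsteps 0 (by omega) with h | h
    · exact h
    · omega
  obtain ⟨m, hm⟩ : ∃ m, 2 * k = m + 1 := ⟨2 * k - 1, by omega⟩
  rw [hm, Finset.prod_range_succ', if_pos hup0, if_pos h0]
  have hcong : ∀ i ∈ Finset.range m,
      (if L (i + 1 + 1) = L (i + 1) + 1 then (if L (i + 1) = 0 then q + 1 else q) else 1)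
        = q ^ (if L (i + 1 + 1) = L (i + 1) + 1 then 1 else 0) := by
    intro i hi
    have himem := Finset.mem_range.mp hi
    have : L (i + 1) ≠ 0 := hpos (i + 1) (by omega) (by omega)
    by_cases hc : L (i + 1 + 1) = L (i + 1) + 1
    · rw [if_pos hc, if_neg this, if_pos hc, pow_one]
    · rw [if_neg hc, if_neg hc, pow_zero]
  rw [Finset.prod_congr rfl hcong, Finset.prod_pow_eq_pow_sum]
  have hsplit := Finset.sum_range_succ' (fun i => if L (i + 1) = L i + 1 then 1 else 0) m
  rw [← hm, hsum, if_pos hup0] at hsplit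
  have : (∑ i ∈ Finset.range m, (if L (i + 1 + 1) = L (i + 1) + 1 then 1 else 0)) = k - 1 := by
    omega
  rw [this, mul_comm]

/-- For any fixed Dyck path (α_1,...,α_{2k−1}) of length 2k−2 (with
α_1 = α_{2k−1} = 0 and successive terms differing by 1), the number of
non-returning closed walks (C, v_2, ..., v_{2k}, C) in the (q+1)-regular tree
projecting to it via v ↦ dist(v) − 1 equals (q+1)·q^{k−1}.  Here dist(v) is the
distance to the root, i.e. the length of the reduced word v. -/
theorem card_fiber_over_dyck_path (q k : ℕ) (hq : 1 ≤ q) (hk : 1 ≤ k)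
    (α : ℕ → ℕ) (h0 : α 0 = 0) (hlast : α (2 * k - 2) = 0)
    (hstep : ∀ i, i < 2 * k - 2 → α (i + 1) = α i + 1 ∨ α i = α (i + 1) + 1) :
    Nat.card {f : Fin (2 * k + 1) → TreeV q //
      (f 0 = treeRoot q ∧ f (Fin.last (2 * k)) = treeRoot q ∧
        (∀ i : Fin (2 * k), treeAdj q (f i.castSucc) (f i.succ)) ∧
        ∀ i : Fin (2 * k + 1), i ≠ 0 → i ≠ Fin.last (2 * k) → f i ≠ treeRoot q) ∧
      ∀ i : ℕ, (hi : i < 2 * k - 1) →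
        (f ⟨i + 1, by omega⟩).val.length = α i + 1} =
    (q + 1) * q ^ (k - 1) := by
  set L : ℕ → ℕ := fun i => if i = 0 then 0 else if i = 2 * k then 0 else α (i - 1) + 1 with hLdef
  have hL0 : L 0 = 0 := by simp [hLdef]
  have hL2k : L (2 * k) = 0 := by simp [hLdef]
  have hLmid : ∀ i, 0 < i → i < 2 * k → L i = α (i - 1) + 1 := by
    intro i hi1 hi2
    simp only [hLdef]
    rw [if_neg (by omega), if_neg (by omega)]
  have hpos : ∀ i, 0 < i → i < 2 * k → L i ≠ 0 := by
    intro i hi1 hi2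
    rw [hLmid i hi1 hi2]
    omega
  have hsteps : ∀ i, i < 2 * k → (L (i + 1) = L i + 1 ∨ L i = L (i + 1) + 1) := by
    intro i hi
    rcases Nat.eq_zero_or_pos i with rfl | hi1
    · left
      rw [hL0, hLmid 1 (by omega) (by omega)]
      simp [h0]
    · by_cases htop : i + 1 = 2 * k
      · right
        rw [hLmid i hi1 hi, htop, hL2k]
        have : i - 1 = 2 * k - 2 := by omega
        rw [this, hlast]
      · rw [hLmid i hi1 hi, hLmid (i + 1) (by omega) (by omega)]
        have hii : i - 1 + 1 = i := by omega
        have hii2 : i + 1 - 1 = i := by omega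
        rcases hstep (i - 1) (by omega) with hh | hh
        · left; rw [hii] at hh; rw [hii2, hh]
        · right; rw [hii] at hh; rw [hii2, hh]
  have hiff : ∀ f : Fin (2 * k + 1) → TreeV q,
      ((f 0 = treeRoot q ∧ f (Fin.last (2 * k)) = treeRoot q ∧
        (∀ i : Fin (2 * k), treeAdj q (f i.castSucc) (f i.succ)) ∧
        ∀ i : Fin (2 * k + 1), i ≠ 0 → i ≠ Fin.last (2 * k) → f i ≠ treeRoot q) ∧
      ∀ i : ℕ, (hi : i < 2 * k - 1) →
        (f ⟨i + 1, by omega⟩).val.length = α i + 1) ↔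
      ((∀ i : Fin (2 * k), treeAdj q (f i.castSucc) (f i.succ)) ∧
        ∀ i : Fin (2 * k + 1), (f i).val.length = L i) := by
    intro f
    constructor
    · rintro ⟨⟨hf0, hflast, hadj, _⟩, hlen⟩
      refine ⟨hadj, ?_⟩
      intro i
      by_cases hi0 : (i : ℕ) = 0
      · have hi : i = 0 := Fin.ext hi0
        rw [hi, hf0]
        simp [treeRoot, hLdef]
      · by_cases hi2k : (i : ℕ) = 2 * k
        · have hi : i = Fin.last (2 * k) := Fin.ext (by simp [hi2k])
          rw [hi, hflast]
          simp only [Fin.val_last]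
          simp [treeRoot, hL2k]
        · have h1 : 0 < (i : ℕ) := by omega
          have h2 : (i : ℕ) < 2 * k := by have := i.isLt; omega
          have hl := hlen ((i : ℕ) - 1) (by omega)
          have hidx : (⟨(i : ℕ) - 1 + 1, by omega⟩ : Fin (2 * k + 1)) = i :=
            Fin.ext (by simp; omega)
          rw [hidx] at hl
          rw [hl, hLmid (i : ℕ) h1 h2]
    · rintro ⟨hadj, hlen⟩
      have hroot : ∀ i : Fin (2 * k + 1), L (i : ℕ) = 0 → f i = treeRoot q := by
        intro i hi
        have := hlen i
        rw [hi] at this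
        exact Subtype.ext (List.length_eq_zero_iff.mp this)
      refine ⟨⟨hroot 0 (by simpa using hL0), hroot (Fin.last (2 * k)) (by simpa using hL2k),
        hadj, ?_⟩, ?_⟩
      · intro i hi0 hilast hEq
        have h1 : 0 < (i : ℕ) := by
          rcases Nat.eq_zero_or_pos (i : ℕ) with h | h
          · exact absurd (Fin.ext h) hi0
          · exact h
        have h2 : (i : ℕ) < 2 * k := by
          have := i.isLt
          by_cases hcc : (i : ℕ) = 2 * k
          · exact absurd (Fin.ext (by simp [hcc])) hilast
          · omega
        have := hlen i
        rw [hEq, hLmid _ h1 h2] at this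
        simp [treeRoot] at this
      · intro i hi
        have := hlen ⟨i + 1, by omega⟩
        rw [this, hLmid (i + 1) (by omega) (by omega)]
        simp
  rw [Nat.card_congr (Equiv.subtypeEquivRight hiff)]
  have := walk_card q L hL0 (2 * k) hsteps
  rw [show Nat.card {f : Fin (2 * k + 1) → TreeV q //
      (∀ i : Fin (2 * k), treeAdj q (f i.castSucc) (f i.succ)) ∧
        ∀ i : Fin (2 * k + 1), (f i).val.length = L i} = Nat.card (Walk q (2 * k) L) from rfl,
    this]
  exact prod_eval q k hk L hL0 hL2k hpos hsteps
end

section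
/- For any integers q ≥ 1 and l ≥ 1, the coefficient of s^k in the power series expansion of (l/√(1−4qs²)) · ((1 − √(1−4qs²))/(2qs))^l is nonnegative for all k, is zero for k < l, and the series has radius of convergence 1/(2√q). -/
open Finset

namespace GeodesicGF

noncomputable def Pb (n : ℕ) : ℝ := (Nat.centralBinom n : ℝ) / 4 ^ n

lemma Pb_nonneg (n : ℕ) : 0 ≤ Pb n := by unfold Pb; positivity

lemma catalan_mul_quarter_pow (n : ℕ) :
    (catalan n : ℝ) * (1/4) ^ n = 2 * (Pb n - Pb (n + 1)) := by
  have h1 : ((n : ℝ) + 1) * (catalan n : ℝ) = (Nat.centralBinom n : ℝ) := by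
    exact_mod_cast congrArg (Nat.cast : ℕ → ℝ) (succ_mul_catalan_eq_centralBinom n)
  have h2 : ((n : ℝ) + 1) * (Nat.centralBinom (n + 1) : ℝ)
      = 2 * (2 * n + 1) * (Nat.centralBinom n : ℝ) := by
    exact_mod_cast congrArg (Nat.cast : ℕ → ℝ) (Nat.succ_mul_centralBinom_succ n)
  have hn1 : ((n : ℝ) + 1) ≠ 0 := by positivity
  have key : ((n:ℝ)+1) * (4*(catalan n : ℝ) - 8*(Nat.centralBinom n : ℝ)
      + 2*(Nat.centralBinom (n+1) : ℝ)) = 0 := by linear_combination 4*h1 + 2*h2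
  have key2 : 4*(catalan n : ℝ) = 8*(Nat.centralBinom n : ℝ)
      - 2*(Nat.centralBinom (n+1) : ℝ) := by
    have := (mul_eq_zero.mp key).resolve_left hn1
    linarith
  unfold Pb
  have h4 : (4 : ℝ) ^ n ≠ 0 := by positivity
  rw [pow_succ]
  field_simp
  have h5 : (1/4:ℝ)^n * 4^n = 1 := by rw [← mul_pow]; norm_num
  linear_combination key2 + 4*(catalan n:ℝ)*h5

lemma sum_catalan_quarter_le (N : ℕ) :
    ∑ n ∈ range N, (catalan n : ℝ) * (1/4) ^ n ≤ 2 := by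
  have h : ∑ n ∈ range N, (catalan n : ℝ) * (1/4) ^ n = 2 * (Pb 0 - Pb N) := by
    rw [Finset.sum_congr rfl (fun n _ => catalan_mul_quarter_pow n), ← Finset.mul_sum,
      Finset.sum_range_sub' Pb N]
  have h0 : Pb 0 = 1 := by simp [Pb, Nat.centralBinom]
  rw [h, h0]
  nlinarith [Pb_nonneg N]

lemma centralBinom_le_four_pow (n : ℕ) : Nat.centralBinom n ≤ 4 ^ n := by
  have h : Nat.centralBinom n ≤ ∑ i ∈ range (2*n+1), (2*n).choose i := by
    rw [Nat.centralBinom]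
    exact Finset.single_le_sum (f := fun i => (2*n).choose i) (fun i _ => Nat.zero_le _)
      (Finset.mem_range.mpr (by omega))
  calc Nat.centralBinom n ≤ ∑ i ∈ range (2*n+1), (2*n).choose i := h
    _ = 2 ^ (2*n) := Nat.sum_range_choose (2*n)
    _ = 4 ^ n := by rw [pow_mul]; norm_num

lemma catalan_le_four_pow (n : ℕ) : (catalan n : ℝ) ≤ 4 ^ n := by
  have h1 : catalan n ≤ Nat.centralBinom n := by
    have := succ_mul_catalan_eq_centralBinom n
    nlinarith [Nat.succ_pos n]
  calc (catalan n : ℝ) ≤ (Nat.centralBinom n : ℝ) := by exact_mod_cast h1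
    _ ≤ (4:ℝ) ^ n := by exact_mod_cast centralBinom_le_four_pow n

end GeodesicGF

namespace GeodesicGF
open Finset

lemma summable_catalan {x : ℝ} (hx0 : 0 ≤ x) (hx : x < 1/4) :
    Summable (fun n => (catalan n : ℝ) * x ^ n) := by
  refine Summable.of_nonneg_of_le (fun n => by positivity) (fun n => ?_)
    (summable_geometric_of_lt_one (by linarith) (by linarith : 4*x < 1))
  rw [mul_pow]
  exact mul_le_mul_of_nonneg_right (catalan_le_four_pow n) (by positivity)

lemma hasSum_catalan {x : ℝ} (hx0 : 0 < x) (hx : x < 1/4) :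
    HasSum (fun n => (catalan n : ℝ) * x ^ n) ((1 - Real.sqrt (1 - 4*x)) / (2*x)) := by
  have S := summable_catalan hx0.le hx
  set T := ∑' n, (catalan n : ℝ) * x ^ n with hT
  have Tnn : ∀ n, 0 ≤ (catalan n : ℝ) * x ^ n := fun n => by positivity
  have Tle : T ≤ 2 := by
    refine Real.tsum_le_of_sum_range_le Tnn (fun N => ?_)
    refine le_trans (Finset.sum_le_sum (fun n _ => ?_)) (sum_catalan_quarter_le N)
    exact mul_le_mul_of_nonneg_left
      (pow_le_pow_left₀ hx0.le (by linarith) n) (Nat.cast_nonneg _)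
  have hnorm : (fun n => ‖(catalan n : ℝ) * x ^ n‖) = fun n => (catalan n : ℝ) * x ^ n := by
    funext n; rw [Real.norm_eq_abs, abs_of_nonneg (Tnn n)]
  have hS' : Summable fun n => ‖(catalan n : ℝ) * x ^ n‖ := by rw [hnorm]; exact S
  have sq : T * T = ∑' n, (catalan (n+1) : ℝ) * x ^ n := by
    rw [hT, tsum_mul_tsum_eq_tsum_sum_antidiagonal_of_summable_norm hS' hS']
    congr 1; funext n
    have : ∀ kl ∈ Finset.HasAntidiagonal.antidiagonal n,
        ((catalan kl.1 : ℝ) * x ^ kl.1) * ((catalan kl.2 : ℝ) * x ^ kl.2)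
        = ((catalan kl.1 : ℝ) * (catalan kl.2 : ℝ)) * x ^ n := by
      intro kl hkl
      rw [Finset.HasAntidiagonal.mem_antidiagonal] at hkl
      rw [← hkl, pow_add]; ring
    rw [Finset.sum_congr rfl this, ← Finset.sum_mul]
    congr 1
    rw [catalan_succ']
    push_cast
    rfl
  have quad : x * (T * T) = T - 1 := by
    have h1 : T = 1 + ∑' n, (catalan (n+1) : ℝ) * x ^ (n+1) := by
      rw [hT, S.tsum_eq_zero_add]; norm_num
    rw [sq, ← tsum_mul_left]
    have : (fun n => x * ((catalan (n+1) : ℝ) * x ^ n))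
        = fun n => (catalan (n+1) : ℝ) * x ^ (n+1) := by
      funext n; rw [pow_succ]; ring
    rw [this]; linarith [h1]
  set d := Real.sqrt (1 - 4*x) with hdd
  have hd2 : d^2 = 1 - 4*x := Real.sq_sqrt (by linarith)
  have hd0 : 0 < d := Real.sqrt_pos.mpr (by linarith)
  have hx2 : (2:ℝ) < (1+d)/(2*x) := by
    rw [lt_div_iff₀ (by linarith)]
    nlinarith
  have hne : T - (1+d)/(2*x) ≠ 0 := by
    have : T < (1+d)/(2*x) := lt_of_le_of_lt Tle hx2
    linarith
  have factor : x * ((T - (1-d)/(2*x)) * (T - (1+d)/(2*x))) = 0 := by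
    have hx' : (2:ℝ)*x ≠ 0 := by positivity
    field_simp
    linear_combination (4*x)*quad - hd2
  have h5 : T - (1-d)/(2*x) = 0 := by
    rcases mul_eq_zero.mp factor with h | h
    · exact absurd h (by positivity)
    · rcases mul_eq_zero.mp h with h | h
      · exact h
      · exact absurd h hne
  have : T = (1-d)/(2*x) := by linarith
  rw [← this]
  exact S.hasSum

end GeodesicGF

namespace GeodesicGF
open Finset

/-- coefficients of `(1-sqrt(1-4qs^2))/(2qs)` as a power series in `s` -/
noncomputable def aCoef (q : ℕ) : ℕ → ℝ := fun k =>
  if k % 2 = 1 then (catalan (k/2) : ℝ) * (q : ℝ) ^ (k/2) else 0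

lemma aCoef_nonneg (q : ℕ) (k : ℕ) : 0 ≤ aCoef q k := by
  unfold aCoef; split <;> positivity

lemma aCoef_zero (q : ℕ) : aCoef q 0 = 0 := by simp [aCoef]

lemma aCoef_one (q : ℕ) : aCoef q 1 = 1 := by simp [aCoef]

lemma aCoef_odd (q n : ℕ) : aCoef q (2*n+1) = (catalan n : ℝ) * (q:ℝ)^n := by
  have h1 : (2*n+1) % 2 = 1 := by omega
  have h2 : (2*n+1) / 2 = n := by omega
  simp [aCoef, h1, h2]

/-- the function `(1-sqrt(1-4qs^2))/(2qs)` -/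
noncomputable def A (q : ℕ) (s : ℝ) : ℝ :=
  (1 - Real.sqrt (1 - 4*(q:ℝ)*s^2)) / (2*(q:ℝ)*s)

lemma x_bounds (q : ℕ) (hq : 1 ≤ q) {s : ℝ} (hs : s ≠ 0)
    (h : |s| < 1 / (2 * Real.sqrt q)) : 0 < (q:ℝ)*s^2 ∧ (q:ℝ)*s^2 < 1/4 := by
  have hq0 : (0:ℝ) < q := by exact_mod_cast hq
  have hsq : Real.sqrt q > 0 := Real.sqrt_pos.mpr hq0
  constructor
  · positivity
  · have h2 : |s| * (2 * Real.sqrt q) < 1 := by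
      rw [← lt_div_iff₀ (by positivity)]; exact h
    have h3 : (|s| * (2 * Real.sqrt q))^2 < 1 := by
      nlinarith [abs_nonneg s, mul_nonneg (abs_nonneg s) (by positivity : (0:ℝ) ≤ 2*Real.sqrt q)]
    have h4 : (|s|)^2 = s^2 := sq_abs s
    have h5 : (Real.sqrt q)^2 = q := Real.sq_sqrt hq0.le
    nlinarith [h3]

lemma hasSum_aCoef (q : ℕ) (hq : 1 ≤ q) {s : ℝ} (hs : s ≠ 0)
    (h : |s| < 1 / (2 * Real.sqrt q)) :
    HasSum (fun k => aCoef q k * s ^ k) (A q s) := by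
  obtain ⟨hx0, hx⟩ := x_bounds q hq hs h
  have hcat := (hasSum_catalan hx0 hx).mul_left s
  have hq0 : (q:ℝ) ≠ 0 := by positivity
  have hinj : Function.Injective (fun n => 2*n+1 : ℕ → ℕ) := by
    intro a b hab
    simp only at hab
    omega
  have hzero : ∀ k, k ∉ Set.range (fun n => 2*n+1 : ℕ → ℕ) → aCoef q k * s ^ k = 0 := by
    intro k hk
    have : k % 2 = 0 := by
      by_contra hne
      exact hk ⟨k/2, by show 2*(k/2)+1 = k; omega⟩
    simp [aCoef, this]
  rw [← Function.Injective.hasSum_iff hinj hzero]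
  have hfun : ((fun k => aCoef q k * s ^ k) ∘ (fun n => 2*n+1))
      = fun n => s * ((catalan n : ℝ) * ((q:ℝ)*s^2) ^ n) := by
    funext n
    simp only [Function.comp_apply, aCoef_odd]
    rw [mul_pow, ← pow_mul]
    ring
  rw [hfun]
  have hval : s * ((1 - Real.sqrt (1 - 4*((q:ℝ)*s^2))) / (2*((q:ℝ)*s^2))) = A q s := by
    unfold A
    have : (1:ℝ) - 4*((q:ℝ)*s^2) = 1 - 4*(q:ℝ)*s^2 := by ring
    rw [this]
    field_simp
  rw [← hval]
  exact hcat

/-- convolution powers of aCoef -/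
noncomputable def pCoef (q : ℕ) : ℕ → ℕ → ℝ
  | 0 => fun k => if k = 0 then 1 else 0
  | m+1 => fun k => ∑ kl ∈ Finset.HasAntidiagonal.antidiagonal k, pCoef q m kl.1 * aCoef q kl.2

lemma pCoef_nonneg (q m k : ℕ) : 0 ≤ pCoef q m k := by
  induction m generalizing k with
  | zero => unfold pCoef; split <;> norm_num
  | succ m ih =>
    unfold pCoef
    exact Finset.sum_nonneg (fun kl _ => mul_nonneg (ih kl.1) (aCoef_nonneg q kl.2))

lemma pCoef_eq_zero (q : ℕ) {m k : ℕ} (h : k < m) : pCoef q m k = 0 := by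
  induction m generalizing k with
  | zero => omega
  | succ m ih =>
    unfold pCoef
    refine Finset.sum_eq_zero (fun kl hkl => ?_)
    rw [Finset.HasAntidiagonal.mem_antidiagonal] at hkl
    by_cases h1 : kl.1 < m
    · rw [ih h1, zero_mul]
    · have : kl.2 = 0 := by omega
      rw [this, aCoef_zero, mul_zero]

lemma hasSum_cauchy {f g : ℕ → ℝ} {F G : ℝ} (hf : HasSum f F) (hg : HasSum g G)
    (hf' : Summable fun k => ‖f k‖) (hg' : Summable fun k => ‖g k‖) :
    HasSum (fun n => ∑ kl ∈ Finset.HasAntidiagonal.antidiagonal n, f kl.1 * g kl.2) (F*G) := by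
  have hs : Summable (fun n => ∑ kl ∈ Finset.HasAntidiagonal.antidiagonal n, f kl.1 * g kl.2) :=
    summable_sum_mul_antidiagonal_of_summable_norm' hf' hf.summable hg' hg.summable
  have heq := tsum_mul_tsum_eq_tsum_sum_antidiagonal_of_summable_norm hf' hg'
  rw [hf.tsum_eq, hg.tsum_eq] at heq
  exact heq ▸ hs.hasSum

lemma norm_coeff_eq {c : ℕ → ℝ} (hc : ∀ k, 0 ≤ c k) (s : ℝ) :
    (fun k => ‖c k * s ^ k‖) = fun k => c k * |s| ^ k := by
  funext k
  rw [Real.norm_eq_abs, abs_mul, abs_of_nonneg (hc k), abs_pow]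

lemma hasSum_pCoef (q : ℕ) (hq : 1 ≤ q) (m : ℕ) :
    ∀ s : ℝ, s ≠ 0 → |s| < 1 / (2 * Real.sqrt q) →
    HasSum (fun k => pCoef q m k * s ^ k) (A q s ^ m) := by
  induction m with
  | zero =>
    intro s hs h
    have : (fun k => pCoef q 0 k * s ^ k) = fun k => if k = 0 then (1:ℝ) else 0 := by
      funext k
      show (if k = 0 then (1:ℝ) else 0) * s ^ k = _
      split
      · subst ‹k = 0›; simp
      · simp
    rw [this, pow_zero]
    exact hasSum_ite_eq 0 1
  | succ m ih =>
    intro s hs h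
    have habs : |s| ≠ 0 := by simpa using hs
    have habs2 : |(|s|)| < 1 / (2 * Real.sqrt q) := by rwa [abs_abs]
    have hfm := ih s hs h
    have hfa := hasSum_aCoef q hq hs h
    have hfm' : Summable fun k => ‖pCoef q m k * s ^ k‖ := by
      rw [norm_coeff_eq (pCoef_nonneg q m) s]
      exact ((ih |s| habs habs2).summable).congr (fun k => rfl)
    have hfa' : Summable fun k => ‖aCoef q k * s ^ k‖ := by
      rw [norm_coeff_eq (aCoef_nonneg q) s]
      exact ((hasSum_aCoef q hq habs habs2).summable).congr (fun k => rfl)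
    have key := hasSum_cauchy hfm hfa hfm' hfa'
    have : (fun n => ∑ kl ∈ Finset.HasAntidiagonal.antidiagonal n,
        (pCoef q m kl.1 * s ^ kl.1) * (aCoef q kl.2 * s ^ kl.2))
        = fun k => pCoef q (m+1) k * s ^ k := by
      funext n
      show _ = (∑ kl ∈ Finset.HasAntidiagonal.antidiagonal n, pCoef q m kl.1 * aCoef q kl.2) * s ^ n
      rw [Finset.sum_mul]
      refine Finset.sum_congr rfl (fun kl hkl => ?_)
      rw [Finset.HasAntidiagonal.mem_antidiagonal] at hkl
      rw [← hkl, pow_add]; ring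
    rw [this] at key
    rw [pow_succ]
    exact key

end GeodesicGF

namespace GeodesicGF
open Finset Filter

noncomputable def cCoef (q l : ℕ) : ℕ → ℝ := fun k =>
  (l:ℝ) * ∑ j ∈ Finset.range (k+1), (2*(q:ℝ))^j * pCoef q (l+j) (k-j)

lemma cCoef_nonneg (q l k : ℕ) : 0 ≤ cCoef q l k := by
  unfold cCoef
  exact mul_nonneg (Nat.cast_nonneg _) (Finset.sum_nonneg
    (fun j _ => mul_nonneg (by positivity) (pCoef_nonneg q _ _)))

lemma cCoef_eq_zero (q l : ℕ) {k : ℕ} (h : k < l) : cCoef q l k = 0 := by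
  unfold cCoef
  rw [Finset.sum_eq_zero (fun j _ => ?_), mul_zero]
  rw [pCoef_eq_zero q (by omega), mul_zero]

lemma pCoef_one (q k : ℕ) : pCoef q 1 k = aCoef q k := by
  show (∑ kl ∈ Finset.HasAntidiagonal.antidiagonal k, pCoef q 0 kl.1 * aCoef q kl.2) = _
  rw [Finset.sum_eq_single_of_mem (0, k) (by rw [Finset.HasAntidiagonal.mem_antidiagonal]; omega)]
  · show (if (0:ℕ) = 0 then (1:ℝ) else 0) * aCoef q k = aCoef q k
    simp
  · intro kl hkl hne
    rw [Finset.HasAntidiagonal.mem_antidiagonal] at hkl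
    have h1 : kl.1 ≠ 0 := by
      intro hc
      exact hne (Prod.ext hc (by omega))
    show (if kl.1 = 0 then (1:ℝ) else 0) * aCoef q kl.2 = 0
    simp [h1]

lemma pCoef_lower (q : ℕ) : ∀ m, 1 ≤ m → ∀ n : ℕ,
    (catalan n : ℝ) * (q:ℝ)^n ≤ pCoef q m (2*n+m) := by
  intro m
  induction m with
  | zero => omega
  | succ m ih =>
    intro _ n
    by_cases hm : 1 ≤ m
    · have step : pCoef q m (2*n+m) * aCoef q 1 ≤ pCoef q (m+1) (2*n+(m+1)) := by
        show _ ≤ ∑ kl ∈ Finset.HasAntidiagonal.antidiagonal (2*n+(m+1)), pCoef q m kl.1 * aCoef q kl.2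
        refine Finset.single_le_sum (f := fun kl => pCoef q m kl.1 * aCoef q kl.2)
          (fun kl _ => mul_nonneg (pCoef_nonneg q _ _) (aCoef_nonneg q _))
          (a := (2*n+m, 1)) (by rw [Finset.HasAntidiagonal.mem_antidiagonal]; show 2*n+m+1 = 2*n+(m+1); omega)
      rw [aCoef_one, mul_one] at step
      exact le_trans (ih hm n) step
    · have hm0 : m = 0 := by omega
      subst hm0
      rw [pCoef_one]
      have : 2*n+1 = 2*n+1 := rfl
      rw [aCoef_odd]

lemma cCoef_lower (q l : ℕ) (hl : 1 ≤ l) (n : ℕ) :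
    (l:ℝ) * ((catalan n : ℝ) * (q:ℝ)^n) ≤ cCoef q l (2*n+l) := by
  unfold cCoef
  refine mul_le_mul_of_nonneg_left ?_ (Nat.cast_nonneg _)
  have h0 : (2*(q:ℝ))^0 * pCoef q (l+0) (2*n+l-0) = pCoef q l (2*n+l) := by
    simp
  calc (catalan n : ℝ) * (q:ℝ)^n ≤ pCoef q l (2*n+l) := pCoef_lower q l hl n
    _ = (2*(q:ℝ))^0 * pCoef q (l+0) (2*n+l-0) := h0.symm
    _ ≤ ∑ j ∈ Finset.range (2*n+l+1), (2*(q:ℝ))^j * pCoef q (l+j) (2*n+l-j) :=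
        Finset.single_le_sum (f := fun j => (2*(q:ℝ))^j * pCoef q (l+j) (2*n+l-j))
          (fun j _ => mul_nonneg (by positivity) (pCoef_nonneg q _ _))
          (Finset.mem_range.mpr (by omega))

end GeodesicGF

namespace GeodesicGF
open Finset Filter

noncomputable def F (q l : ℕ) (s : ℝ) : ℕ × ℕ → ℝ := fun p =>
  (l:ℝ) * ((2*(q:ℝ))^p.1 * pCoef q (l+p.1) (p.2 - p.1) * s^p.2)

lemma sqrt_facts (q : ℕ) (hq : 1 ≤ q) {s : ℝ} (hs : s ≠ 0)
    (h : |s| < 1 / (2 * Real.sqrt q)) :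
    0 < Real.sqrt (1 - 4*(q:ℝ)*s^2) ∧ Real.sqrt (1 - 4*(q:ℝ)*s^2) < 1 ∧
      2*(q:ℝ)*s * A q s = 1 - Real.sqrt (1 - 4*(q:ℝ)*s^2) := by
  obtain ⟨hx0, hx⟩ := x_bounds q hq hs h
  have hδ0 : (0:ℝ) < 1 - 4*(q:ℝ)*s^2 := by nlinarith
  have hδ1 : 1 - 4*(q:ℝ)*s^2 < 1 := by nlinarith
  have hd0 : 0 < Real.sqrt (1 - 4*(q:ℝ)*s^2) := Real.sqrt_pos.mpr hδ0
  have hd2 : (Real.sqrt (1 - 4*(q:ℝ)*s^2))^2 = 1 - 4*(q:ℝ)*s^2 := Real.sq_sqrt hδ0.le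
  refine ⟨hd0, by nlinarith, ?_⟩
  unfold A
  have hq0 : (q:ℝ) ≠ 0 := by positivity
  field_simp

lemma hasSum_F_fiber (q l : ℕ) (hq : 1 ≤ q) (hl : 1 ≤ l) {s : ℝ} (hs : s ≠ 0)
    (h : |s| < 1 / (2 * Real.sqrt q)) (j : ℕ) :
    HasSum (fun k => F q l s (j, k)) ((l:ℝ) * (2*(q:ℝ)*s)^j * A q s ^ (l+j)) := by
  have base := (hasSum_pCoef q hq (l+j) s hs h).mul_left ((l:ℝ) * (2*(q:ℝ)*s)^j)
  have hfun : (fun k => ((l:ℝ) * (2*(q:ℝ)*s)^j) * (pCoef q (l+j) k * s ^ k))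
      = fun k => F q l s (j, k + j) := by
    funext k
    show _ = (l:ℝ) * ((2*(q:ℝ))^j * pCoef q (l+j) (k + j - j) * s^(k+j))
    rw [Nat.add_sub_cancel, pow_add, mul_pow]
    ring
  rw [hfun] at base
  have key := (hasSum_nat_add_iff (f := fun k => F q l s (j, k)) j).mp base
  have hzero : ∑ i ∈ Finset.range j, F q l s (j, i) = 0 := by
    refine Finset.sum_eq_zero (fun i hi => ?_)
    rw [Finset.mem_range] at hi
    show (l:ℝ) * ((2*(q:ℝ))^j * pCoef q (l+j) (i - j) * s^i) = 0
    rw [pCoef_eq_zero q (by omega), mul_zero, zero_mul, mul_zero]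
  rwa [hzero, add_zero] at key

lemma hasSum_geo (q l : ℕ) (hq : 1 ≤ q) (hl : 1 ≤ l) {s : ℝ} (hs : s ≠ 0)
    (h : |s| < 1 / (2 * Real.sqrt q)) :
    HasSum (fun j => (l:ℝ) * (2*(q:ℝ)*s)^j * A q s ^ (l+j))
      ((l:ℝ) / Real.sqrt (1 - 4*(q:ℝ)*s^2) * A q s ^ l) := by
  obtain ⟨hd0, hd1, hkey⟩ := sqrt_facts q hq hs h
  set d := Real.sqrt (1 - 4*(q:ℝ)*s^2) with hdd
  have geo := (hasSum_geometric_of_lt_one (by linarith : (0:ℝ) ≤ 1 - d)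
    (by linarith)).mul_left ((l:ℝ) * A q s ^ l)
  have hfun : (fun j => ((l:ℝ) * A q s ^ l) * (1-d)^j)
      = fun j => (l:ℝ) * (2*(q:ℝ)*s)^j * A q s ^ (l+j) := by
    funext j
    rw [← hkey, mul_pow, mul_pow, pow_add]
    ring
  have hval : ((l:ℝ) * A q s ^ l) * (1 - (1 - d))⁻¹ = (l:ℝ)/d * A q s ^ l := by
    rw [show (1:ℝ) - (1 - d) = d by ring]
    field_simp
  rw [hfun, hval] at geo
  exact geo

lemma summable_F (q l : ℕ) (hq : 1 ≤ q) (hl : 1 ≤ l) {s : ℝ} (hs : s ≠ 0)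
    (h : |s| < 1 / (2 * Real.sqrt q)) : Summable (F q l s) := by
  have habs : |s| ≠ 0 := by simpa using hs
  have habs2 : |(|s|)| < 1 / (2 * Real.sqrt q) := by rwa [abs_abs]
  have hnn : 0 ≤ F q l |s| := by
    intro p
    exact mul_nonneg (Nat.cast_nonneg _) (mul_nonneg
      (mul_nonneg (by positivity) (pCoef_nonneg q _ _)) (by positivity))
  have hfib := fun j => hasSum_F_fiber q l hq hl habs habs2 j
  have hsum' : Summable (F q l |s|) := by
    refine (summable_prod_of_nonneg hnn).mpr ⟨fun j => (hfib j).summable, ?_⟩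
    have heq : (fun j => ∑' k, F q l |s| (j,k))
        = fun j => (l:ℝ) * (2*(q:ℝ)*|s|)^j * A q |s| ^ (l+j) :=
      funext fun j => (hfib j).tsum_eq
    rw [heq]
    exact (hasSum_geo q l hq hl habs habs2).summable
  refine Summable.of_norm ?_
  have : (fun p => ‖F q l s p‖) = F q l |s| := by
    funext p
    unfold F
    rw [Real.norm_eq_abs, abs_mul, abs_mul, abs_mul, abs_pow, abs_pow,
      abs_of_nonneg (Nat.cast_nonneg (α := ℝ) l), abs_of_nonneg (pCoef_nonneg q _ _),
      abs_of_nonneg (by positivity : (0:ℝ) ≤ 2*(q:ℝ))]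
  rw [this]
  exact hsum'

lemma main_hasSum (q l : ℕ) (hq : 1 ≤ q) (hl : 1 ≤ l) {s : ℝ} (hs : s ≠ 0)
    (h : |s| < 1 / (2 * Real.sqrt q)) :
    HasSum (fun k => cCoef q l k * s ^ k)
      ((l:ℝ) / Real.sqrt (1 - 4*(q:ℝ)*s^2) * A q s ^ l) := by
  have hsF := summable_F q l hq hl hs h
  have hS := hsF.hasSum
  have hfib := fun j => hasSum_F_fiber q l hq hl hs h j
  have h1 : HasSum (fun j => (l:ℝ) * (2*(q:ℝ)*s)^j * A q s ^ (l+j)) (∑' p, F q l s p) :=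
    HasSum.prod_fiberwise hS hfib
  have hSval : (∑' p, F q l s p)
      = (l:ℝ) / Real.sqrt (1 - 4*(q:ℝ)*s^2) * A q s ^ l :=
    h1.unique (hasSum_geo q l hq hl hs h)
  have hswap : HasSum (fun p : ℕ × ℕ => F q l s (p.2, p.1)) (∑' p, F q l s p) := by
    have := ((Equiv.prodComm ℕ ℕ).hasSum_iff (f := F q l s) (a := ∑' p, F q l s p)).mpr hS
    simpa [Function.comp_def, Equiv.prodComm, Prod.swap] using this
  have hfibk : ∀ k, HasSum (fun j => F q l s (j, k)) (cCoef q l k * s ^ k) := by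
    intro k
    have hz : ∀ j ∉ Finset.range (k+1), F q l s (j, k) = 0 := by
      intro j hj
      rw [Finset.mem_range] at hj
      show (l:ℝ) * ((2*(q:ℝ))^j * pCoef q (l+j) (k - j) * s^k) = 0
      rw [pCoef_eq_zero q (by omega), mul_zero, zero_mul, mul_zero]
    have hsumfin : HasSum (fun j => F q l s (j,k)) (∑ j ∈ Finset.range (k+1), F q l s (j,k)) :=
      hasSum_sum_of_ne_finset_zero hz
    have hval : ∑ j ∈ Finset.range (k+1), F q l s (j,k) = cCoef q l k * s ^ k := by
      unfold cCoef F
      rw [mul_comm ((l:ℝ) * _) (s ^ k), Finset.mul_sum, Finset.mul_sum]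
      refine Finset.sum_congr rfl (fun j _ => ?_)
      ring
    exact hval ▸ hsumfin
  have final : HasSum (fun k => cCoef q l k * s ^ k) (∑' p, F q l s p) :=
    HasSum.prod_fiberwise hswap hfibk
  rwa [hSval] at final

end GeodesicGF

namespace GeodesicGF
open Finset Filter

lemma not_summable_c (q l : ℕ) (hq : 1 ≤ q) (hl : 1 ≤ l) {s : ℝ}
    (h : 1 / (2 * Real.sqrt q) < |s|) :
    ¬ Summable (fun k => cCoef q l k * s ^ k) := by
  intro hsum
  have hq0 : (0:ℝ) < q := by exact_mod_cast hq
  have hsq : (0:ℝ) < Real.sqrt q := Real.sqrt_pos.mpr hq0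
  have hs0 : s ≠ 0 := by
    intro hc
    rw [hc, abs_zero] at h
    have : (0:ℝ) < 1 / (2*Real.sqrt q) := by positivity
    linarith
  have hR : 1 < 4*(q:ℝ)*s^2 := by
    have h2 : 1 < |s| * (2*Real.sqrt q) := by
      rw [div_lt_iff₀ (by positivity)] at h
      linarith
    have h3 := Real.sq_sqrt hq0.le
    nlinarith [sq_abs s, abs_nonneg s, mul_pos (abs_pos.mpr hs0) (by positivity : (0:ℝ) < 2*Real.sqrt q)]
  set R := 4*(q:ℝ)*s^2 with hRdef
  have hu : (0:ℝ) < s^2 := by positivity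
  have hterm := hsum.tendsto_atTop_zero
  have hcomp : Tendsto (fun n : ℕ => 2*n+l) atTop atTop :=
    tendsto_atTop_atTop.mpr (fun b => ⟨b, fun a ha => by omega⟩)
  have hg : Tendsto (fun n => cCoef q l (2*n+l) * s ^ (2*n+l)) atTop (nhds 0) :=
    hterm.comp hcomp
  have hgabs : Tendsto (fun n => |cCoef q l (2*n+l) * s ^ (2*n+l)|) atTop (nhds 0) := by
    have := hg.abs
    simpa using this
  have hr0 : (0:ℝ) ≤ R⁻¹ := by positivity
  have hr1 : R⁻¹ < 1 := by
    rw [inv_lt_one_iff₀]; right; exact hR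
  have t2 := tendsto_pow_const_mul_const_pow_of_lt_one 2 hr0 hr1
  have t1 := tendsto_pow_const_mul_const_pow_of_lt_one 1 hr0 hr1
  have tφ : Tendsto (fun n : ℕ => 2*(n:ℝ)*((n:ℝ)+1) * (R⁻¹)^n) atTop (nhds 0) := by
    have hh := (t2.const_mul (2:ℝ)).add (t1.const_mul (2:ℝ))
    simp only [mul_zero, add_zero, zero_add] at hh
    refine Tendsto.congr (fun n => ?_) hh
    ring
  have hprod : Tendsto (fun n : ℕ => |cCoef q l (2*n+l) * s ^ (2*n+l)|
      * (2*(n:ℝ)*((n:ℝ)+1) * (R⁻¹)^n)) atTop (nhds 0) := by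
    have := hgabs.mul tφ
    simpa using this
  have hε : (0:ℝ) < (l:ℝ) * |s|^l := by
    have : (0:ℝ) < (l:ℝ) := by exact_mod_cast hl
    positivity
  have hev : ∀ᶠ n : ℕ in atTop, (l:ℝ)*|s|^l ≤ |cCoef q l (2*n+l) * s ^ (2*n+l)|
      * (2*(n:ℝ)*((n:ℝ)+1) * (R⁻¹)^n) := by
    filter_upwards [eventually_ge_atTop 1] with n hn
    have hcnn := cCoef_nonneg q l (2*n+l)
    have habs : |cCoef q l (2*n+l) * s ^ (2*n+l)| = cCoef q l (2*n+l) * |s|^(2*n+l) := by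
      rw [abs_mul, abs_of_nonneg hcnn, abs_pow]
    have hc := cCoef_lower q l hl n
    have hcat4 : (4:ℝ)^n ≤ 2*(n:ℝ)*((n:ℝ)+1)*(catalan n : ℝ) := by
      have hnat : 4^n ≤ 2*n*((n+1)*catalan n) := by
        have := Nat.four_pow_le_two_mul_self_mul_centralBinom n (by omega)
        rwa [← succ_mul_catalan_eq_centralBinom n] at this
      calc (4:ℝ)^n ≤ ((2*n*((n+1)*catalan n) : ℕ) : ℝ) := by exact_mod_cast hnat
        _ = 2*(n:ℝ)*((n:ℝ)+1)*(catalan n : ℝ) := by push_cast; ring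
    have hkey : (l:ℝ)*((4:ℝ)^n*(q:ℝ)^n) ≤ cCoef q l (2*n+l) * (2*(n:ℝ)*((n:ℝ)+1)) := by
      calc (l:ℝ)*((4:ℝ)^n*(q:ℝ)^n)
          ≤ (l:ℝ)*((2*(n:ℝ)*((n:ℝ)+1)*(catalan n:ℝ))*(q:ℝ)^n) := by
            refine mul_le_mul_of_nonneg_left ?_ (Nat.cast_nonneg _)
            exact mul_le_mul_of_nonneg_right hcat4 (by positivity)
        _ = ((l:ℝ)*((catalan n:ℝ)*(q:ℝ)^n)) * (2*(n:ℝ)*((n:ℝ)+1)) := by ring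
        _ ≤ cCoef q l (2*n+l) * (2*(n:ℝ)*((n:ℝ)+1)) := by
            refine mul_le_mul_of_nonneg_right hc (by positivity)
    have hpow : |s|^(2*n+l) = (s^2)^n * |s|^l := by
      rw [pow_add, pow_mul, sq_abs]
    have hRn : (0:ℝ) < R^n := by positivity
    have hRn' : R^n = 4^n*(q:ℝ)^n*(s^2)^n := by
      rw [hRdef, mul_pow, mul_pow]
    have main : (l:ℝ)*|s|^l * R^n ≤ cCoef q l (2*n+l) * |s|^(2*n+l) * (2*(n:ℝ)*((n:ℝ)+1)) := by
      calc (l:ℝ)*|s|^l * R^n = ((l:ℝ)*((4:ℝ)^n*(q:ℝ)^n)) * ((s^2)^n * |s|^l) := by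
            rw [hRn']; ring
        _ ≤ (cCoef q l (2*n+l) * (2*(n:ℝ)*((n:ℝ)+1))) * ((s^2)^n * |s|^l) :=
            mul_le_mul_of_nonneg_right hkey (by positivity)
        _ = cCoef q l (2*n+l) * |s|^(2*n+l) * (2*(n:ℝ)*((n:ℝ)+1)) := by
            rw [hpow]; ring
    rw [habs]
    have hRne : R^n ≠ 0 := ne_of_gt hRn
    calc (l:ℝ)*|s|^l = ((l:ℝ)*|s|^l * R^n) * (R^n)⁻¹ := by field_simp
      _ ≤ (cCoef q l (2*n+l) * |s|^(2*n+l) * (2*(n:ℝ)*((n:ℝ)+1))) * (R^n)⁻¹ :=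
          mul_le_mul_of_nonneg_right main (by positivity)
      _ = cCoef q l (2*n+l) * |s|^(2*n+l) * (2*(n:ℝ)*((n:ℝ)+1) * (R⁻¹)^n) := by
          rw [inv_pow]; ring
  have hlt := hprod.eventually (gt_mem_nhds hε)
  rcases (hev.and hlt).exists with ⟨n, h1, h2⟩
  linarith

end GeodesicGF

/-- For integers q ≥ 1 and l ≥ 1, the power series expansion
Σ_k c_k s^k of (l/√(1−4qs²))·((1 − √(1−4qs²))/(2qs))^l has nonnegative
coefficients, c_k = 0 for k < l, and radius of convergence 1/(2√q). -/
theorem coeffs_of_geodesic_generating_function (q l : ℕ) (hq : 1 ≤ q) (hl : 1 ≤ l) :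
    ∃ c : ℕ → ℝ,
      (∀ k, 0 ≤ c k) ∧
      (∀ k, k < l → c k = 0) ∧
      (∀ s : ℝ, s ≠ 0 → |s| < 1 / (2 * Real.sqrt q) →
        HasSum (fun k : ℕ => c k * s ^ k)
          (((l : ℝ) / Real.sqrt (1 - 4 * q * s ^ 2)) *
            ((1 - Real.sqrt (1 - 4 * q * s ^ 2)) / (2 * q * s)) ^ l)) ∧
      (∀ s : ℝ, |s| < 1 / (2 * Real.sqrt q) → Summable (fun k : ℕ => c k * s ^ k)) ∧
      (∀ s : ℝ, 1 / (2 * Real.sqrt q) < |s| → ¬ Summable (fun k : ℕ => c k * s ^ k)) := by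
  refine ⟨GeodesicGF.cCoef q l, GeodesicGF.cCoef_nonneg q l,
    fun k hk => GeodesicGF.cCoef_eq_zero q l hk, ?_, ?_, ?_⟩
  · intro s hs h
    have := GeodesicGF.main_hasSum q l hq hl hs h
    simpa [GeodesicGF.A] using this
  · intro s h
    by_cases hs : s = 0
    · subst hs
      apply summable_of_ne_finset_zero (s := ({0} : Finset ℕ))
      intro k hk
      simp only [Finset.mem_singleton] at hk
      simp [zero_pow hk]
    · exact (GeodesicGF.main_hasSum q l hq hl hs h).summable
  · intro s h
    exact GeodesicGF.not_summable_c q l hq hl h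
end
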